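/- Fix an integer e ≥ 1. For each n ≥ 0, the set Iₙ is an ideal of R̃e(k); the quotient Iₙ/Iₙ₊₁ is a free W(k)-module of rank one, generated by the class of Tⁿ/(⌊n/e⌋)!; and for every n ≥ 1 the Frobenius lift Φ maps Iₙ into I_{pn}, hence into Iₙ₊₁. -/

import Mathlib

/-!
Piano rings (A. Vasiu, "Shimura varieties and the Mumford–Tate conjecture", §2.1).

`W(k)` is the ring of `p`-typical Witt vectors of a perfect field `k` of characteristic `p`,
`B(k) = W(k)[1/p]` its fraction field.  For `e ≥ 1`, the piano ring `R̃e(k)` of resonance `e`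
consists of the power series `Σ aₙ Tⁿ ∈ B(k)[[T]]` with `aₙ ⬝ (⌊n/e⌋)! ∈ W(k)` for all `n`,
and the piano ring `Re(k)` of convergent resonance `e` consists of those for which moreover
`bₙ := aₙ ⬝ (⌊n/e⌋)!` converges `p`-adically to `0`.
-/

noncomputable section

open PowerSeries

variable (p : ℕ) [Fact p.Prime] (k : Type*) [Field k] [CharP k p] [PerfectRing k p]

/-- `x` lies in the canonical image of `W(k)` inside `B(k)`. -/
def InW (x : FractionRing (WittVector p k)) : Prop :=
  ∃ w : WittVector p k,
    algebraMap (WittVector p k) (FractionRing (WittVector p k)) w = x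

/-- The piano ring `R̃e(k)` of resonance `e`: power series `Σ aₙ Tⁿ` over `B(k)` with
`aₙ ⬝ (⌊n/e⌋)! ∈ W(k)` for all `n`. -/
def pianoTilde (e : ℕ) : Set (PowerSeries (FractionRing (WittVector p k))) :=
  {f | ∀ n : ℕ,
    InW p k (PowerSeries.coeff n f * (Nat.factorial (n / e) : FractionRing (WittVector p k)))}

/-- The piano ring `Re(k)` of convergent resonance `e`: power series `Σ aₙ Tⁿ` over `B(k)`
with `bₙ := aₙ ⬝ (⌊n/e⌋)! ∈ W(k)` for all `n` and `bₙ → 0` `p`-adically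
(for every `m` eventually `bₙ ∈ pᵐ W(k)`). -/
def pianoR (e : ℕ) : Set (PowerSeries (FractionRing (WittVector p k))) :=
  {f | (∀ n : ℕ,
      InW p k (PowerSeries.coeff n f * (Nat.factorial (n / e) : FractionRing (WittVector p k)))) ∧
    ∀ m : ℕ, ∃ N : ℕ, ∀ n ≥ N, ∃ w : WittVector p k,
      algebraMap (WittVector p k) (FractionRing (WittVector p k)) ((p : WittVector p k) ^ m * w)
        = PowerSeries.coeff n f * (Nat.factorial (n / e) : FractionRing (WittVector p k))}

/-- The Frobenius automorphism `σ` of `W(k)` extended to `B(k)`. -/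
def sigmaB : FractionRing (WittVector p k) ≃+* FractionRing (WittVector p k) :=
  IsFractionRing.ringEquivOfRingEquiv (WittVector.frobeniusEquiv p k)

/-- The `σ`-semilinear substitution `F : Σ aₙ Tⁿ ↦ Σ σ(aₙ) T^{pn}` on `B(k)[[T]]`. -/
def Fmap (f : PowerSeries (FractionRing (WittVector p k))) :
    PowerSeries (FractionRing (WittVector p k)) :=
  PowerSeries.mk fun n => if p ∣ n then sigmaB p k (PowerSeries.coeff (n / p) f) else 0

/-- `Iₙ`: the power series in `R̃e(k)` whose coefficients `aₘ` vanish for `m < n`. -/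
def Iset (e n : ℕ) : Set (PowerSeries (FractionRing (WittVector p k))) :=
  {f ∈ pianoTilde p k e | ∀ m < n, PowerSeries.coeff m f = 0}

/-- The element `Tⁿ/(⌊n/e⌋)!` of `B(k)[[T]]`. -/
def genI (e n : ℕ) : PowerSeries (FractionRing (WittVector p k)) :=
  PowerSeries.C
      ((Nat.factorial (n / e) : FractionRing (WittVector p k))⁻¹)
    * PowerSeries.X ^ n

-- auxiliary lemmas
set_option linter.unusedSectionVars false

lemma natCast_W_ne_zero : ∀ n : ℕ, 0 < n → (n : WittVector p k) ≠ 0 := by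
  intro n
  induction n using Nat.strong_induction_on with
  | _ n ih =>
    intro hn
    by_cases hp : p ∣ n
    · obtain ⟨m, rfl⟩ := hp
      have hp2 : 2 ≤ p := (Fact.out : p.Prime).two_le
      have hm : 0 < m := Nat.pos_of_ne_zero (by rintro rfl; simp at hn)
      have : ((p * m : ℕ) : WittVector p k) = (p : WittVector p k) * m := by push_cast; ring
      rw [this]
      exact mul_ne_zero (WittVector.p_nonzero p k) (ih m (by nlinarith) hm)
    · intro h0
      have := congrArg (WittVector.constantCoeff) h0
      simp only [map_natCast, map_zero] at this
      exact hp ((CharP.cast_eq_zero_iff k p n).mp this)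

lemma natCast_K_ne_zero (n : ℕ) (hn : 0 < n) :
    (n : FractionRing (WittVector p k)) ≠ 0 := by
  have h := natCast_W_ne_zero p k n hn
  intro h0
  apply h
  apply IsFractionRing.injective (WittVector p k) (FractionRing (WittVector p k))
  rw [map_natCast, map_zero, h0]

lemma fact_K_ne_zero (n : ℕ) :
    ((Nat.factorial n : ℕ) : FractionRing (WittVector p k)) ≠ 0 :=
  natCast_K_ne_zero p k _ n.factorial_pos

variable {p k}

lemma InW_zero : InW p k 0 := ⟨0, map_zero _⟩

lemma InW_add {x y} (hx : InW p k x) (hy : InW p k y) : InW p k (x + y) := by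
  obtain ⟨w, rfl⟩ := hx; obtain ⟨v, rfl⟩ := hy; exact ⟨w + v, map_add _ _ _⟩

lemma InW_neg {x} (hx : InW p k x) : InW p k (-x) := by
  obtain ⟨w, rfl⟩ := hx; exact ⟨-w, map_neg _ _⟩

lemma InW_mul {x y} (hx : InW p k x) (hy : InW p k y) : InW p k (x * y) := by
  obtain ⟨w, rfl⟩ := hx; obtain ⟨v, rfl⟩ := hy; exact ⟨w * v, map_mul _ _ _⟩

lemma InW_natCast (n : ℕ) : InW p k (n : FractionRing (WittVector p k)) :=
  ⟨n, map_natCast _ n⟩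

lemma InW_sum {s : Finset (ℕ × ℕ)} {F : ℕ × ℕ → FractionRing (WittVector p k)}
    (h : ∀ x ∈ s, InW p k (F x)) : InW p k (∑ x ∈ s, F x) := by
  classical
  induction s using Finset.induction_on with
  | empty => simpa using InW_zero
  | insert _ _ hx ih =>
    rw [Finset.sum_insert hx]
    exact InW_add (h _ (Finset.mem_insert_self _ _))
      (ih fun y hy => h y (Finset.mem_insert_of_mem hy))

lemma InW_key (e i j : ℕ) (a b : FractionRing (WittVector p k))
    (ha : InW p k (a * (Nat.factorial (i / e) : FractionRing (WittVector p k))))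
    (hb : InW p k (b * (Nat.factorial (j / e) : FractionRing (WittVector p k)))) :
    InW p k (a * b * (Nat.factorial ((i + j) / e) : FractionRing (WittVector p k))) := by
  obtain ⟨d, hd⟩ : Nat.factorial (i / e) * Nat.factorial (j / e) ∣ Nat.factorial ((i + j) / e) :=
    (Nat.factorial_mul_factorial_dvd_factorial_add _ _).trans
      (Nat.factorial_dvd_factorial (Nat.add_div_le_add_div i j e))
  have : a * b * (Nat.factorial ((i + j) / e) : FractionRing (WittVector p k)) =
      (a * (Nat.factorial (i / e) : FractionRing (WittVector p k))) *
      (b * (Nat.factorial (j / e) : FractionRing (WittVector p k))) * (d : _) := by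
    rw [hd]; push_cast; ring
  rw [this]
  exact InW_mul (InW_mul ha hb) (InW_natCast d)

lemma sigmaB_algebraMap (w : WittVector p k) :
    sigmaB p k (algebraMap (WittVector p k) (FractionRing (WittVector p k)) w) =
      algebraMap (WittVector p k) (FractionRing (WittVector p k))
        (WittVector.frobeniusEquiv p k w) := by
  simp [sigmaB]

variable (p k)

/-- Fix `e ≥ 1`.  For each `n ≥ 0` the set `Iₙ` is an ideal of `R̃e(k)`;
the quotient `Iₙ/Iₙ₊₁` is a free `W(k)`-module of rank one, generated by the class of
`Tⁿ/(⌊n/e⌋)!`; and for every `n ≥ 1` the Frobenius lift `Φ` maps `Iₙ` into `I_{pn}`, hence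
into `Iₙ₊₁`. -/
theorem Iset_ideal_free_rank_one_frobenius (e : ℕ) (he : 1 ≤ e) :
    -- each `Iₙ` is an ideal of `R̃e(k)`:
    (∀ n : ℕ,
      (0 : PowerSeries (FractionRing (WittVector p k))) ∈ Iset p k e n ∧
      (∀ f ∈ Iset p k e n, ∀ g ∈ Iset p k e n, f + g ∈ Iset p k e n) ∧
      (∀ f ∈ Iset p k e n, -f ∈ Iset p k e n) ∧
      (∀ f ∈ pianoTilde p k e, ∀ g ∈ Iset p k e n, f * g ∈ Iset p k e n)) ∧
    -- `Iₙ/Iₙ₊₁` is free of rank one over `W(k)`, generated by the class of `Tⁿ/(⌊n/e⌋)!`: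
    (∀ n : ℕ,
      genI p k e n ∈ Iset p k e n ∧
      ∀ f ∈ Iset p k e n, ∃! w : WittVector p k,
        f - PowerSeries.C
              (algebraMap (WittVector p k) (FractionRing (WittVector p k)) w)
            * genI p k e n
          ∈ Iset p k e (n + 1)) ∧
    -- for `n ≥ 1`, `Φ` maps `Iₙ` into `I_{pn}`, hence into `Iₙ₊₁`:
    (∀ n : ℕ, 1 ≤ n → ∀ f ∈ Iset p k e n,
      Fmap p k f ∈ Iset p k e (p * n) ∧ Fmap p k f ∈ Iset p k e (n + 1)) := by
  classical
  set K := FractionRing (WittVector p k)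
  have hfact : ∀ m : ℕ, ((Nat.factorial m : ℕ) : K) ≠ 0 := fun m => fact_K_ne_zero p k m
  -- coefficient of genI
  have hgen : ∀ n m : ℕ, PowerSeries.coeff m (genI p k e n) =
      if m = n then ((Nat.factorial (n / e) : K))⁻¹ else 0 := by
    intro n m
    rw [genI, PowerSeries.coeff_C_mul, PowerSeries.coeff_X_pow]
    split <;> simp_all
  have hideal : ∀ n : ℕ,
      (0 : PowerSeries K) ∈ Iset p k e n ∧
      (∀ f ∈ Iset p k e n, ∀ g ∈ Iset p k e n, f + g ∈ Iset p k e n) ∧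
      (∀ f ∈ Iset p k e n, -f ∈ Iset p k e n) ∧
      (∀ f ∈ pianoTilde p k e, ∀ g ∈ Iset p k e n, f * g ∈ Iset p k e n) := by
    intro n
    refine ⟨⟨fun m => by simpa using InW_zero, fun m _ => by simp⟩, ?_, ?_, ?_⟩
    · rintro f ⟨hf, hf0⟩ g ⟨hg, hg0⟩
      refine ⟨fun m => ?_, fun m hm => by simp [hf0 m hm, hg0 m hm]⟩
      rw [map_add, add_mul]
      exact InW_add (hf m) (hg m)
    · rintro f ⟨hf, hf0⟩
      refine ⟨fun m => ?_, fun m hm => by simp [hf0 m hm]⟩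
      rw [map_neg, neg_mul]
      exact InW_neg (hf m)
    · rintro f hf g ⟨hg, hg0⟩
      refine ⟨fun m => ?_, fun m hm => ?_⟩
      · rw [PowerSeries.coeff_mul, Finset.sum_mul]
        refine InW_sum fun x hx => ?_
        rw [Finset.HasAntidiagonal.mem_antidiagonal] at hx
        subst hx
        exact InW_key e x.1 x.2 _ _ (hf x.1) (hg x.2)
      · rw [PowerSeries.coeff_mul]
        refine Finset.sum_eq_zero fun x hx => ?_
        rw [Finset.HasAntidiagonal.mem_antidiagonal] at hx
        have : x.2 < n := lt_of_le_of_lt (hx ▸ Nat.le_add_left x.2 x.1) hm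
        rw [hg0 x.2 this, mul_zero]
  refine ⟨hideal, ?_, ?_⟩
  · -- Part 2: free rank one
    intro n
    constructor
    · refine ⟨fun m => ?_, fun m hm => ?_⟩
      · rw [hgen]
        by_cases h : m = n
        · subst h
          rw [if_pos rfl, inv_mul_cancel₀ (hfact _)]
          exact ⟨1, map_one _⟩
        · rw [if_neg h, zero_mul]; exact InW_zero
      · rw [hgen, if_neg (Nat.ne_of_lt hm)]
    · rintro f ⟨hfp, hf0⟩
      obtain ⟨w, hw⟩ := hfp n
      refine ⟨w, ⟨fun m => ?_, fun m hm => ?_⟩, ?_⟩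
      · -- pianoTilde membership of the difference
        have hCg : ∀ m : ℕ, PowerSeries.coeff m
            (PowerSeries.C (algebraMap (WittVector p k) K w) * genI p k e n) =
            if m = n then algebraMap (WittVector p k) K w * ((Nat.factorial (n / e) : K))⁻¹
            else 0 := by
          intro m
          rw [PowerSeries.coeff_C_mul, hgen]
          split <;> simp
        rw [map_sub, sub_mul, sub_eq_add_neg]
        refine InW_add (hfp m) (InW_neg ?_)
        rw [hCg]
        by_cases h : m = n
        · subst h
          rw [if_pos rfl]
          have : algebraMap (WittVector p k) K w * ((Nat.factorial (m / e) : K))⁻¹ *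
              (Nat.factorial (m / e) : K) = algebraMap (WittVector p k) K w := by
            exact inv_mul_cancel_right₀ (hfact _) _
          rw [this]; exact ⟨w, rfl⟩
        · rw [if_neg h, zero_mul]; exact InW_zero
      · rw [map_sub, PowerSeries.coeff_C_mul, hgen]
        rcases Nat.lt_succ_iff_lt_or_eq.mp hm with h | rfl
        · rw [hf0 m h, if_neg (Nat.ne_of_lt h), mul_zero, sub_zero]
        · rw [if_pos rfl]
          have han : PowerSeries.coeff m f =
              algebraMap (WittVector p k) K w * ((Nat.factorial (m / e) : K))⁻¹ := by
            rw [hw]; field_simp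
            exact (mul_div_cancel_right₀ _ (hfact _)).symm
          rw [han]; ring
      · intro w' hw'
        have h0 := hw'.2 n (Nat.lt_succ_self n)
        rw [map_sub, PowerSeries.coeff_C_mul, hgen, if_pos rfl] at h0
        have h1 : PowerSeries.coeff n f =
            algebraMap (WittVector p k) K w' * ((Nat.factorial (n / e) : K))⁻¹ :=
          sub_eq_zero.mp h0
        apply IsFractionRing.injective (WittVector p k) K
        rw [hw, h1]
        field_simp
        exact (mul_div_cancel_right₀ _ (hfact _)).symm
  · -- Part 3: Frobenius
    intro n hn f ⟨hfp, hf0⟩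
    have hp2 : 2 ≤ p := (Fact.out : p.Prime).two_le
    have hmem : Fmap p k f ∈ Iset p k e (p * n) := by
      refine ⟨fun m => ?_, fun m hm => ?_⟩
      · rw [Fmap, PowerSeries.coeff_mk]
        by_cases h : p ∣ m
        · rw [if_pos h]
          obtain ⟨q, rfl⟩ := h
          rw [Nat.mul_div_cancel_left q (by omega)]
          obtain ⟨w, hw⟩ := hfp q
          obtain ⟨d, hd⟩ : Nat.factorial (q / e) ∣ Nat.factorial ((p * q) / e) :=
            Nat.factorial_dvd_factorial
              (Nat.div_le_div_right (Nat.le_mul_of_pos_left q (by omega)))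
          refine ⟨WittVector.frobeniusEquiv p k w * (d : WittVector p k), ?_⟩
          rw [map_mul, ← sigmaB_algebraMap, hw, map_natCast, map_mul, map_natCast, hd]
          push_cast
          ring
        · rw [if_neg h, zero_mul]; exact InW_zero
      · rw [Fmap, PowerSeries.coeff_mk]
        by_cases h : p ∣ m
        · rw [if_pos h]
          obtain ⟨q, rfl⟩ := h
          rw [Nat.mul_div_cancel_left q (by omega),
            hf0 q (Nat.lt_of_mul_lt_mul_left hm), map_zero]
        · rw [if_neg h]
    exact ⟨hmem, hmem.1, fun m hm => hmem.2 m (by nlinarith)⟩
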